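/- arXiv:1405.4063 — 2 statements merged into one kernel-verified Lean document; each statement's English description precedes it below -/
import Mathlib

section
/- In the ring ℚ⟦X⟧ of formal power series over ℚ, the coefficient of X^20 in the product (1-X^2)^{-1} · (1-X^4)^{-1} · (1-X^6)^{-2} · (1-X^8)^{-1} · (1-X^{10})^{-2} · (1-X^{12})^{-1} · (1-X^{14})^{-1} · (1-X^{16})^{21} · (1-X^{18})^{124} equals -97. -/
open PowerSeries

private lemma invdec (u P : ℚ⟦X⟧) (m : ℕ) (hu : constantCoeff u ≠ 0)
    (hP : u * P = 1 - X ^ m) : u⁻¹ = P + u⁻¹ * X ^ m := by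
  have h1 : u * u⁻¹ = 1 := PowerSeries.mul_inv_cancel u hu
  calc u⁻¹ = u⁻¹ * ((u * P) + (u * u⁻¹) * X ^ m) := by rw [hP, h1]; ring
    _ = (u * u⁻¹) * P + (u * u⁻¹) * (u⁻¹ * X ^ m) := by ring
    _ = P + u⁻¹ * X ^ m := by rw [h1]; ring

private lemma powdec (n : ℕ) (y : ℚ⟦X⟧) : ∃ S, (1 + y) ^ n = 1 + (n : ℚ⟦X⟧) * y + y ^ 2 * S := by
  induction n with
  | zero => exact ⟨0, by simp⟩
  | succ n ih =>
    obtain ⟨S, hS⟩ := ih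
    exact ⟨(n : ℚ⟦X⟧) + S + S * y, by rw [pow_succ, hS]; push_cast; ring⟩

private lemma step (f g Q P R₁ R₂ Q' : ℚ⟦X⟧) (m : ℕ) (hm : 21 ≤ m)
    (hg : g = P + R₂ * X ^ m) (hPQ : P * Q = Q' + R₁ * X ^ 21) :
    PowerSeries.coeff 20 (f * g * Q) = PowerSeries.coeff 20 (f * Q') := by
  have h1 : f * g * Q = f * Q' + (f * R₁) * X ^ 21 + (f * (R₂ * Q)) * X ^ m := by
    rw [hg]; linear_combination f * hPQ
  rw [h1, map_add, map_add, PowerSeries.coeff_mul_X_pow', PowerSeries.coeff_mul_X_pow',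
    if_neg (by omega), if_neg (by omega), add_zero, add_zero]

set_option maxHeartbeats 4000000 in
/-- The coefficient of `X^20` in
`(1-X²)⁻¹(1-X⁴)⁻¹(1-X⁶)⁻²(1-X⁸)⁻¹(1-X¹⁰)⁻²(1-X¹²)⁻¹(1-X¹⁴)⁻¹(1-X¹⁶)²¹(1-X¹⁸)¹²⁴`
in `ℚ⟦X⟧` equals `-97`. -/
theorem coeff20_lower_terms :
    PowerSeries.coeff 20
      ((1 - (X : ℚ⟦X⟧) ^ 2)⁻¹ * (1 - X ^ 4)⁻¹ * ((1 - X ^ 6)⁻¹) ^ 2 *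
        (1 - X ^ 8)⁻¹ * ((1 - X ^ 10)⁻¹) ^ 2 * (1 - X ^ 12)⁻¹ * (1 - X ^ 14)⁻¹ *
        (1 - X ^ 16) ^ 21 * (1 - X ^ 18) ^ 124) = -97 := by
  have hA : (1 - (X:ℚ⟦X⟧)^2)⁻¹ = ((1 : ℚ⟦X⟧) + X^2 + X^4 + X^6 + X^8 + X^10 + X^12 + X^14 + X^16 + X^18 + X^20) + (1 - (X:ℚ⟦X⟧)^2)⁻¹ * X^22 :=
    invdec _ _ _ (by simp) (by ring)
  have hB : (1 - (X:ℚ⟦X⟧)^4)⁻¹ = ((1 : ℚ⟦X⟧) + X^4 + X^8 + X^12 + X^16 + X^20) + (1 - (X:ℚ⟦X⟧)^4)⁻¹ * X^24 :=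
    invdec _ _ _ (by simp) (by ring)
  have hC : (1 - (X:ℚ⟦X⟧)^6)⁻¹ = ((1 : ℚ⟦X⟧) + X^6 + X^12 + X^18) + (1 - (X:ℚ⟦X⟧)^6)⁻¹ * X^24 :=
    invdec _ _ _ (by simp) (by ring)
  have hD : (1 - (X:ℚ⟦X⟧)^8)⁻¹ = ((1 : ℚ⟦X⟧) + X^8 + X^16) + (1 - (X:ℚ⟦X⟧)^8)⁻¹ * X^24 :=
    invdec _ _ _ (by simp) (by ring)
  have hE : (1 - (X:ℚ⟦X⟧)^10)⁻¹ = ((1 : ℚ⟦X⟧) + X^10 + X^20) + (1 - (X:ℚ⟦X⟧)^10)⁻¹ * X^30 :=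
    invdec _ _ _ (by simp) (by ring)
  have hF : (1 - (X:ℚ⟦X⟧)^12)⁻¹ = ((1 : ℚ⟦X⟧) + X^12) + (1 - (X:ℚ⟦X⟧)^12)⁻¹ * X^24 :=
    invdec _ _ _ (by simp) (by ring)
  have hG : (1 - (X:ℚ⟦X⟧)^14)⁻¹ = ((1 : ℚ⟦X⟧) + X^14) + (1 - (X:ℚ⟦X⟧)^14)⁻¹ * X^28 :=
    invdec _ _ _ (by simp) (by ring)
  obtain ⟨SH, hSH⟩ := powdec 21 (-(X:ℚ⟦X⟧)^16)
  have hH : (1 - (X:ℚ⟦X⟧)^16)^21 = ((1 : ℚ⟦X⟧) + (-21 : ℚ⟦X⟧)*X^16) + SH * X^32 := by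
    rw [show (1 - (X:ℚ⟦X⟧)^16) = 1 + -(X:ℚ⟦X⟧)^16 from by ring, hSH]; push_cast; ring
  obtain ⟨SI, hSI⟩ := powdec 124 (-(X:ℚ⟦X⟧)^18)
  have hI : (1 - (X:ℚ⟦X⟧)^18)^124 = ((1 : ℚ⟦X⟧) + (-124 : ℚ⟦X⟧)*X^18) + SI * X^36 := by
    rw [show (1 - (X:ℚ⟦X⟧)^18) = 1 + -(X:ℚ⟦X⟧)^18 from by ring, hSI]; push_cast; ring
  obtain ⟨Hg, hHgdef⟩ : ∃ g : ℚ⟦X⟧, (1 - (X:ℚ⟦X⟧)^16)^21 = g := ⟨_, rfl⟩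
  obtain ⟨Ig, hIgdef⟩ : ∃ g : ℚ⟦X⟧, (1 - (X:ℚ⟦X⟧)^18)^124 = g := ⟨_, rfl⟩
  rw [hHgdef] at hH
  rw [hIgdef] at hI
  rw [hHgdef, hIgdef]
  calc PowerSeries.coeff 20 ((1 - (X : ℚ⟦X⟧) ^ 2)⁻¹ * (1 - X ^ 4)⁻¹ * ((1 - X ^ 6)⁻¹) ^ 2 * (1 - X ^ 8)⁻¹ * ((1 - X ^ 10)⁻¹) ^ 2 * (1 - X ^ 12)⁻¹ * (1 - X ^ 14)⁻¹ * Hg * Ig)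
      = PowerSeries.coeff 20 (((1 - (X:ℚ⟦X⟧)^2)⁻¹ * (1 - (X:ℚ⟦X⟧)^4)⁻¹ * (1 - (X:ℚ⟦X⟧)^6)⁻¹ * (1 - (X:ℚ⟦X⟧)^6)⁻¹ * (1 - (X:ℚ⟦X⟧)^8)⁻¹ * (1 - (X:ℚ⟦X⟧)^10)⁻¹ * (1 - (X:ℚ⟦X⟧)^10)⁻¹ * (1 - (X:ℚ⟦X⟧)^12)⁻¹ * (1 - (X:ℚ⟦X⟧)^14)⁻¹ * Hg) * (Ig) * ((1 : ℚ⟦X⟧))) := congrArg (PowerSeries.coeff 20) (by ring)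
    _ = PowerSeries.coeff 20 (((1 - (X:ℚ⟦X⟧)^2)⁻¹ * (1 - (X:ℚ⟦X⟧)^4)⁻¹ * (1 - (X:ℚ⟦X⟧)^6)⁻¹ * (1 - (X:ℚ⟦X⟧)^6)⁻¹ * (1 - (X:ℚ⟦X⟧)^8)⁻¹ * (1 - (X:ℚ⟦X⟧)^10)⁻¹ * (1 - (X:ℚ⟦X⟧)^10)⁻¹ * (1 - (X:ℚ⟦X⟧)^12)⁻¹ * (1 - (X:ℚ⟦X⟧)^14)⁻¹ * Hg) * ((1 : ℚ⟦X⟧) + (-124 : ℚ⟦X⟧)*X^18)) :=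
      step _ _ _ _ ((0 : ℚ⟦X⟧)) _ _ _ (by norm_num) hI (by ring)
    _ = PowerSeries.coeff 20 (((1 - (X:ℚ⟦X⟧)^2)⁻¹ * (1 - (X:ℚ⟦X⟧)^4)⁻¹ * (1 - (X:ℚ⟦X⟧)^6)⁻¹ * (1 - (X:ℚ⟦X⟧)^6)⁻¹ * (1 - (X:ℚ⟦X⟧)^8)⁻¹ * (1 - (X:ℚ⟦X⟧)^10)⁻¹ * (1 - (X:ℚ⟦X⟧)^10)⁻¹ * (1 - (X:ℚ⟦X⟧)^12)⁻¹ * (1 - (X:ℚ⟦X⟧)^14)⁻¹) * (Hg) * ((1 : ℚ⟦X⟧) + (-124 : ℚ⟦X⟧)*X^18)) := congrArg (PowerSeries.coeff 20) (by ring)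
    _ = PowerSeries.coeff 20 (((1 - (X:ℚ⟦X⟧)^2)⁻¹ * (1 - (X:ℚ⟦X⟧)^4)⁻¹ * (1 - (X:ℚ⟦X⟧)^6)⁻¹ * (1 - (X:ℚ⟦X⟧)^6)⁻¹ * (1 - (X:ℚ⟦X⟧)^8)⁻¹ * (1 - (X:ℚ⟦X⟧)^10)⁻¹ * (1 - (X:ℚ⟦X⟧)^10)⁻¹ * (1 - (X:ℚ⟦X⟧)^12)⁻¹ * (1 - (X:ℚ⟦X⟧)^14)⁻¹) * ((1 : ℚ⟦X⟧) + (-21 : ℚ⟦X⟧)*X^16 + (-124 : ℚ⟦X⟧)*X^18)) :=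
      step _ _ _ _ ((2604 : ℚ⟦X⟧)*X^13) _ _ _ (by norm_num) hH (by ring)
    _ = PowerSeries.coeff 20 (((1 - (X:ℚ⟦X⟧)^2)⁻¹ * (1 - (X:ℚ⟦X⟧)^4)⁻¹ * (1 - (X:ℚ⟦X⟧)^6)⁻¹ * (1 - (X:ℚ⟦X⟧)^6)⁻¹ * (1 - (X:ℚ⟦X⟧)^8)⁻¹ * (1 - (X:ℚ⟦X⟧)^10)⁻¹ * (1 - (X:ℚ⟦X⟧)^10)⁻¹ * (1 - (X:ℚ⟦X⟧)^12)⁻¹) * ((1 - (X:ℚ⟦X⟧)^14)⁻¹) * ((1 : ℚ⟦X⟧) + (-21 : ℚ⟦X⟧)*X^16 + (-124 : ℚ⟦X⟧)*X^18)) := congrArg (PowerSeries.coeff 20) (by ring)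
    _ = PowerSeries.coeff 20 (((1 - (X:ℚ⟦X⟧)^2)⁻¹ * (1 - (X:ℚ⟦X⟧)^4)⁻¹ * (1 - (X:ℚ⟦X⟧)^6)⁻¹ * (1 - (X:ℚ⟦X⟧)^6)⁻¹ * (1 - (X:ℚ⟦X⟧)^8)⁻¹ * (1 - (X:ℚ⟦X⟧)^10)⁻¹ * (1 - (X:ℚ⟦X⟧)^10)⁻¹ * (1 - (X:ℚ⟦X⟧)^12)⁻¹) * ((1 : ℚ⟦X⟧) + X^14 + (-21 : ℚ⟦X⟧)*X^16 + (-124 : ℚ⟦X⟧)*X^18)) :=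
      step _ _ _ _ ((-21 : ℚ⟦X⟧)*X^9 + (-124 : ℚ⟦X⟧)*X^11) _ _ _ (by norm_num) hG (by ring)
    _ = PowerSeries.coeff 20 (((1 - (X:ℚ⟦X⟧)^2)⁻¹ * (1 - (X:ℚ⟦X⟧)^4)⁻¹ * (1 - (X:ℚ⟦X⟧)^6)⁻¹ * (1 - (X:ℚ⟦X⟧)^6)⁻¹ * (1 - (X:ℚ⟦X⟧)^8)⁻¹ * (1 - (X:ℚ⟦X⟧)^10)⁻¹ * (1 - (X:ℚ⟦X⟧)^10)⁻¹) * ((1 - (X:ℚ⟦X⟧)^12)⁻¹) * ((1 : ℚ⟦X⟧) + X^14 + (-21 : ℚ⟦X⟧)*X^16 + (-124 : ℚ⟦X⟧)*X^18)) := congrArg (PowerSeries.coeff 20) (by ring)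
    _ = PowerSeries.coeff 20 (((1 - (X:ℚ⟦X⟧)^2)⁻¹ * (1 - (X:ℚ⟦X⟧)^4)⁻¹ * (1 - (X:ℚ⟦X⟧)^6)⁻¹ * (1 - (X:ℚ⟦X⟧)^6)⁻¹ * (1 - (X:ℚ⟦X⟧)^8)⁻¹ * (1 - (X:ℚ⟦X⟧)^10)⁻¹ * (1 - (X:ℚ⟦X⟧)^10)⁻¹) * ((1 : ℚ⟦X⟧) + X^12 + X^14 + (-21 : ℚ⟦X⟧)*X^16 + (-124 : ℚ⟦X⟧)*X^18)) :=
      step _ _ _ _ (X^5 + (-21 : ℚ⟦X⟧)*X^7 + (-124 : ℚ⟦X⟧)*X^9) _ _ _ (by norm_num) hF (by ring)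
    _ = PowerSeries.coeff 20 (((1 - (X:ℚ⟦X⟧)^2)⁻¹ * (1 - (X:ℚ⟦X⟧)^4)⁻¹ * (1 - (X:ℚ⟦X⟧)^6)⁻¹ * (1 - (X:ℚ⟦X⟧)^6)⁻¹ * (1 - (X:ℚ⟦X⟧)^8)⁻¹ * (1 - (X:ℚ⟦X⟧)^10)⁻¹) * ((1 - (X:ℚ⟦X⟧)^10)⁻¹) * ((1 : ℚ⟦X⟧) + X^12 + X^14 + (-21 : ℚ⟦X⟧)*X^16 + (-124 : ℚ⟦X⟧)*X^18)) := congrArg (PowerSeries.coeff 20) (by ring)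
    _ = PowerSeries.coeff 20 (((1 - (X:ℚ⟦X⟧)^2)⁻¹ * (1 - (X:ℚ⟦X⟧)^4)⁻¹ * (1 - (X:ℚ⟦X⟧)^6)⁻¹ * (1 - (X:ℚ⟦X⟧)^6)⁻¹ * (1 - (X:ℚ⟦X⟧)^8)⁻¹ * (1 - (X:ℚ⟦X⟧)^10)⁻¹) * ((1 : ℚ⟦X⟧) + X^10 + X^12 + X^14 + (-21 : ℚ⟦X⟧)*X^16 + (-124 : ℚ⟦X⟧)*X^18 + X^20)) :=
      step _ _ _ _ (X^1 + X^3 + (-21 : ℚ⟦X⟧)*X^5 + (-124 : ℚ⟦X⟧)*X^7 + X^11 + X^13 + (-21 : ℚ⟦X⟧)*X^15 + (-124 : ℚ⟦X⟧)*X^17) _ _ _ (by norm_num) hE (by ring)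
    _ = PowerSeries.coeff 20 (((1 - (X:ℚ⟦X⟧)^2)⁻¹ * (1 - (X:ℚ⟦X⟧)^4)⁻¹ * (1 - (X:ℚ⟦X⟧)^6)⁻¹ * (1 - (X:ℚ⟦X⟧)^6)⁻¹ * (1 - (X:ℚ⟦X⟧)^8)⁻¹) * ((1 - (X:ℚ⟦X⟧)^10)⁻¹) * ((1 : ℚ⟦X⟧) + X^10 + X^12 + X^14 + (-21 : ℚ⟦X⟧)*X^16 + (-124 : ℚ⟦X⟧)*X^18 + X^20)) := congrArg (PowerSeries.coeff 20) (by ring)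
    _ = PowerSeries.coeff 20 (((1 - (X:ℚ⟦X⟧)^2)⁻¹ * (1 - (X:ℚ⟦X⟧)^4)⁻¹ * (1 - (X:ℚ⟦X⟧)^6)⁻¹ * (1 - (X:ℚ⟦X⟧)^6)⁻¹ * (1 - (X:ℚ⟦X⟧)^8)⁻¹) * ((1 : ℚ⟦X⟧) + (2 : ℚ⟦X⟧)*X^10 + X^12 + X^14 + (-21 : ℚ⟦X⟧)*X^16 + (-124 : ℚ⟦X⟧)*X^18 + (3 : ℚ⟦X⟧)*X^20)) :=
      step _ _ _ _ (X^1 + X^3 + (-21 : ℚ⟦X⟧)*X^5 + (-124 : ℚ⟦X⟧)*X^7 + (2 : ℚ⟦X⟧)*X^9 + X^11 + X^13 + (-21 : ℚ⟦X⟧)*X^15 + (-124 : ℚ⟦X⟧)*X^17 + X^19) _ _ _ (by norm_num) hE (by ring)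
    _ = PowerSeries.coeff 20 (((1 - (X:ℚ⟦X⟧)^2)⁻¹ * (1 - (X:ℚ⟦X⟧)^4)⁻¹ * (1 - (X:ℚ⟦X⟧)^6)⁻¹ * (1 - (X:ℚ⟦X⟧)^6)⁻¹) * ((1 - (X:ℚ⟦X⟧)^8)⁻¹) * ((1 : ℚ⟦X⟧) + (2 : ℚ⟦X⟧)*X^10 + X^12 + X^14 + (-21 : ℚ⟦X⟧)*X^16 + (-124 : ℚ⟦X⟧)*X^18 + (3 : ℚ⟦X⟧)*X^20)) := congrArg (PowerSeries.coeff 20) (by ring)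
    _ = PowerSeries.coeff 20 (((1 - (X:ℚ⟦X⟧)^2)⁻¹ * (1 - (X:ℚ⟦X⟧)^4)⁻¹ * (1 - (X:ℚ⟦X⟧)^6)⁻¹ * (1 - (X:ℚ⟦X⟧)^6)⁻¹) * ((1 : ℚ⟦X⟧) + X^8 + (2 : ℚ⟦X⟧)*X^10 + X^12 + X^14 + (-20 : ℚ⟦X⟧)*X^16 + (-122 : ℚ⟦X⟧)*X^18 + (4 : ℚ⟦X⟧)*X^20)) :=
      step _ _ _ _ (X^1 + (-21 : ℚ⟦X⟧)*X^3 + (-122 : ℚ⟦X⟧)*X^5 + (4 : ℚ⟦X⟧)*X^7 + X^9 + (-21 : ℚ⟦X⟧)*X^11 + (-124 : ℚ⟦X⟧)*X^13 + (3 : ℚ⟦X⟧)*X^15) _ _ _ (by norm_num) hD (by ring)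
    _ = PowerSeries.coeff 20 (((1 - (X:ℚ⟦X⟧)^2)⁻¹ * (1 - (X:ℚ⟦X⟧)^4)⁻¹ * (1 - (X:ℚ⟦X⟧)^6)⁻¹) * ((1 - (X:ℚ⟦X⟧)^6)⁻¹) * ((1 : ℚ⟦X⟧) + X^8 + (2 : ℚ⟦X⟧)*X^10 + X^12 + X^14 + (-20 : ℚ⟦X⟧)*X^16 + (-122 : ℚ⟦X⟧)*X^18 + (4 : ℚ⟦X⟧)*X^20)) := congrArg (PowerSeries.coeff 20) (by ring)
    _ = PowerSeries.coeff 20 (((1 - (X:ℚ⟦X⟧)^2)⁻¹ * (1 - (X:ℚ⟦X⟧)^4)⁻¹ * (1 - (X:ℚ⟦X⟧)^6)⁻¹) * ((1 : ℚ⟦X⟧) + X^6 + X^8 + (2 : ℚ⟦X⟧)*X^10 + (2 : ℚ⟦X⟧)*X^12 + (2 : ℚ⟦X⟧)*X^14 + (-18 : ℚ⟦X⟧)*X^16 + (-120 : ℚ⟦X⟧)*X^18 + (6 : ℚ⟦X⟧)*X^20)) :=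
      step _ _ _ _ ((-18 : ℚ⟦X⟧)*X^1 + (-121 : ℚ⟦X⟧)*X^3 + (6 : ℚ⟦X⟧)*X^5 + (-18 : ℚ⟦X⟧)*X^7 + (-121 : ℚ⟦X⟧)*X^9 + (5 : ℚ⟦X⟧)*X^11 + (-20 : ℚ⟦X⟧)*X^13 + (-122 : ℚ⟦X⟧)*X^15 + (4 : ℚ⟦X⟧)*X^17) _ _ _ (by norm_num) hC (by ring)
    _ = PowerSeries.coeff 20 (((1 - (X:ℚ⟦X⟧)^2)⁻¹ * (1 - (X:ℚ⟦X⟧)^4)⁻¹) * ((1 - (X:ℚ⟦X⟧)^6)⁻¹) * ((1 : ℚ⟦X⟧) + X^6 + X^8 + (2 : ℚ⟦X⟧)*X^10 + (2 : ℚ⟦X⟧)*X^12 + (2 : ℚ⟦X⟧)*X^14 + (-18 : ℚ⟦X⟧)*X^16 + (-120 : ℚ⟦X⟧)*X^18 + (6 : ℚ⟦X⟧)*X^20)) := congrArg (PowerSeries.coeff 20) (by ring)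
    _ = PowerSeries.coeff 20 (((1 - (X:ℚ⟦X⟧)^2)⁻¹ * (1 - (X:ℚ⟦X⟧)^4)⁻¹) * ((1 : ℚ⟦X⟧) + (2 : ℚ⟦X⟧)*X^6 + X^8 + (2 : ℚ⟦X⟧)*X^10 + (4 : ℚ⟦X⟧)*X^12 + (3 : ℚ⟦X⟧)*X^14 + (-16 : ℚ⟦X⟧)*X^16 + (-116 : ℚ⟦X⟧)*X^18 + (9 : ℚ⟦X⟧)*X^20)) :=
      step _ _ _ _ ((-16 : ℚ⟦X⟧)*X^1 + (-117 : ℚ⟦X⟧)*X^3 + (9 : ℚ⟦X⟧)*X^5 + (-16 : ℚ⟦X⟧)*X^7 + (-118 : ℚ⟦X⟧)*X^9 + (8 : ℚ⟦X⟧)*X^11 + (-18 : ℚ⟦X⟧)*X^13 + (-120 : ℚ⟦X⟧)*X^15 + (6 : ℚ⟦X⟧)*X^17) _ _ _ (by norm_num) hC (by ring)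
    _ = PowerSeries.coeff 20 (((1 - (X:ℚ⟦X⟧)^2)⁻¹) * ((1 - (X:ℚ⟦X⟧)^4)⁻¹) * ((1 : ℚ⟦X⟧) + (2 : ℚ⟦X⟧)*X^6 + X^8 + (2 : ℚ⟦X⟧)*X^10 + (4 : ℚ⟦X⟧)*X^12 + (3 : ℚ⟦X⟧)*X^14 + (-16 : ℚ⟦X⟧)*X^16 + (-116 : ℚ⟦X⟧)*X^18 + (9 : ℚ⟦X⟧)*X^20)) := congrArg (PowerSeries.coeff 20) (by ring)
    _ = PowerSeries.coeff 20 (((1 - (X:ℚ⟦X⟧)^2)⁻¹) * ((1 : ℚ⟦X⟧) + X^4 + (2 : ℚ⟦X⟧)*X^6 + (2 : ℚ⟦X⟧)*X^8 + (4 : ℚ⟦X⟧)*X^10 + (6 : ℚ⟦X⟧)*X^12 + (7 : ℚ⟦X⟧)*X^14 + (-10 : ℚ⟦X⟧)*X^16 + (-109 : ℚ⟦X⟧)*X^18 + (-1 : ℚ⟦X⟧)*X^20)) :=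
      step _ _ _ _ ((-109 : ℚ⟦X⟧)*X^1 + (-2 : ℚ⟦X⟧)*X^3 + (-109 : ℚ⟦X⟧)*X^5 + (-2 : ℚ⟦X⟧)*X^7 + (-111 : ℚ⟦X⟧)*X^9 + (-3 : ℚ⟦X⟧)*X^11 + (-113 : ℚ⟦X⟧)*X^13 + (-7 : ℚ⟦X⟧)*X^15 + (-116 : ℚ⟦X⟧)*X^17 + (9 : ℚ⟦X⟧)*X^19) _ _ _ (by norm_num) hB (by ring)
    _ = PowerSeries.coeff 20 (((1 : ℚ⟦X⟧)) * ((1 - (X:ℚ⟦X⟧)^2)⁻¹) * ((1 : ℚ⟦X⟧) + X^4 + (2 : ℚ⟦X⟧)*X^6 + (2 : ℚ⟦X⟧)*X^8 + (4 : ℚ⟦X⟧)*X^10 + (6 : ℚ⟦X⟧)*X^12 + (7 : ℚ⟦X⟧)*X^14 + (-10 : ℚ⟦X⟧)*X^16 + (-109 : ℚ⟦X⟧)*X^18 + (-1 : ℚ⟦X⟧)*X^20)) := congrArg (PowerSeries.coeff 20) (by ring)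
    _ = PowerSeries.coeff 20 (((1 : ℚ⟦X⟧)) * ((1 : ℚ⟦X⟧) + X^2 + (2 : ℚ⟦X⟧)*X^4 + (4 : ℚ⟦X⟧)*X^6 + (6 : ℚ⟦X⟧)*X^8 + (10 : ℚ⟦X⟧)*X^10 + (16 : ℚ⟦X⟧)*X^12 + (23 : ℚ⟦X⟧)*X^14 + (13 : ℚ⟦X⟧)*X^16 + (-96 : ℚ⟦X⟧)*X^18 + (-97 : ℚ⟦X⟧)*X^20)) :=
      step _ _ _ _ ((-98 : ℚ⟦X⟧)*X^1 + (-98 : ℚ⟦X⟧)*X^3 + (-99 : ℚ⟦X⟧)*X^5 + (-101 : ℚ⟦X⟧)*X^7 + (-103 : ℚ⟦X⟧)*X^9 + (-107 : ℚ⟦X⟧)*X^11 + (-113 : ℚ⟦X⟧)*X^13 + (-120 : ℚ⟦X⟧)*X^15 + (-110 : ℚ⟦X⟧)*X^17 + (-1 : ℚ⟦X⟧)*X^19) _ _ _ (by norm_num) hA (by ring)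
    _ = -97 := by
      ring_nf
      simp [PowerSeries.coeff_X_pow, ← map_ofNat C, PowerSeries.coeff_mul_C]
end

section
/- In the ring ℚ⟦X⟧ of formal power series over ℚ, let h̄(X) = (1-X^2)^{-1} · (1-X^4)^{-1} · (1-X^6)^{-2} · (1-X^8)^{-1} · (1-X^{10})^{-2} · (1-X^{12})^{-1} · (1-X^{14})^{-1} · (1-X^{16})^{21} · (1-X^{18})^{124} · (1-X^{20})^{1202}. Then the coefficients of h̄(X) in degrees 0 through 20 are: 1 in degree 0; 1, 2, 4, 6, 10, 16, 23, 13, -96, -1299 in degrees 2, 4, 6, 8, 10, 12, 14, 16, 18, 20 respectively; and 0 in all odd degrees up to 19. -/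
open PowerSeries

/-- The series `h̄(X) = ∏ (1-X^{2n-2})^{-e(Out Fₙ)}` for `2 ≤ n ≤ 11`. -/
noncomputable def hBar : PowerSeries ℚ :=
  (1 - (X : ℚ⟦X⟧) ^ 2)⁻¹ * (1 - X ^ 4)⁻¹ * ((1 - X ^ 6)⁻¹) ^ 2 *
    (1 - X ^ 8)⁻¹ * ((1 - X ^ 10)⁻¹) ^ 2 * (1 - X ^ 12)⁻¹ * (1 - X ^ 14)⁻¹ *
    (1 - X ^ 16) ^ 21 * (1 - X ^ 18) ^ 124 * (1 - X ^ 20) ^ 1202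

private lemma inv_approx {k N : ℕ} (hk : k ≠ 0) {S : ℚ⟦X⟧}
    (hS : (1 - (X : ℚ⟦X⟧) ^ k) * S = 1 - X ^ N) :
    (X : ℚ⟦X⟧) ^ N ∣ (1 - (X : ℚ⟦X⟧) ^ k)⁻¹ - S := by
  set u := (1 - (X : ℚ⟦X⟧) ^ k)⁻¹ with hu
  have hc : constantCoeff (R := ℚ) (1 - (X : ℚ⟦X⟧) ^ k) ≠ 0 := by
    simp [hk]
  have h1 : (1 - (X : ℚ⟦X⟧) ^ k) * u = 1 := PowerSeries.mul_inv_cancel _ hc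
  have h2 : (1 - (X : ℚ⟦X⟧) ^ k) * (u - S) = X ^ N := by
    rw [mul_sub, h1, hS]; ring
  have h3 : u - S = u * X ^ N := by
    calc u - S = ((1 - (X : ℚ⟦X⟧) ^ k) * u) * (u - S) := by rw [h1, one_mul]
    _ = u * ((1 - (X : ℚ⟦X⟧) ^ k) * (u - S)) := by ring
    _ = u * X ^ N := by rw [h2]
  rw [h3]
  exact dvd_mul_left _ _

private lemma pow_approx (m : ℕ) (y : ℚ⟦X⟧) :
    y ^ 2 ∣ (1 - y) ^ m - (1 - (m : ℚ⟦X⟧) * y) := by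
  induction m with
  | zero => simp
  | succ n ih =>
    have h : (1 - y) ^ (n + 1) - (1 - ((n + 1 : ℕ) : ℚ⟦X⟧) * y)
        = (1 - y) * ((1 - y) ^ n - (1 - (n : ℚ⟦X⟧) * y)) + (n : ℚ⟦X⟧) * y ^ 2 := by
      push_cast; ring
    rw [h]
    exact dvd_add (ih.mul_left _) (dvd_mul_left _ _)

private lemma step_s6 {d p t f s t' q : ℚ⟦X⟧} (h1 : d ∣ p - t) (h2 : d ∣ f - s)
    (h3 : t * s - t' = d * q) : d ∣ p * f - t' := by
  have h : p * f - t' = (p - t) * f + t * (f - s) + d * q := by rw [← h3]; ring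
  rw [h]
  exact dvd_add (dvd_add (h1.mul_right f) (h2.mul_left t)) (Dvd.intro q rfl)

private lemma sq_approx {d a s : ℚ⟦X⟧} (h : d ∣ a - s) : d ∣ a ^ 2 - s ^ 2 := by
  have h2 : a ^ 2 - s ^ 2 = (a - s) * (a + s) := by ring
  rw [h2]; exact h.mul_right _

private lemma pow_big (m : ℕ) (b : ℕ) (hb : 21 ≤ 2 * b) :
    (X : ℚ⟦X⟧) ^ 21 ∣ (1 - (X : ℚ⟦X⟧) ^ b) ^ m - (1 - (m : ℚ⟦X⟧) * X ^ b) := by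
  have h := pow_approx m ((X : ℚ⟦X⟧) ^ b)
  rw [← pow_mul] at h
  exact dvd_trans (pow_dvd_pow X (by omega : 21 ≤ b * 2)) h

private lemma inv2 : (X : ℚ⟦X⟧) ^ 21 ∣ (1 - (X : ℚ⟦X⟧) ^ 2)⁻¹ - (1 + X ^ 2 + X ^ 4 + X ^ 6 + X ^ 8 + X ^ 10 + X ^ 12 + X ^ 14 + X ^ 16 + X ^ 18 + X ^ 20) := by
  refine dvd_trans (pow_dvd_pow X (by norm_num : 21 ≤ 22)) (inv_approx (by norm_num) ?_)
  ring

private lemma inv4 : (X : ℚ⟦X⟧) ^ 21 ∣ (1 - (X : ℚ⟦X⟧) ^ 4)⁻¹ - (1 + X ^ 4 + X ^ 8 + X ^ 12 + X ^ 16 + X ^ 20) := by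
  refine dvd_trans (pow_dvd_pow X (by norm_num : 21 ≤ 24)) (inv_approx (by norm_num) ?_)
  ring

private lemma inv6 : (X : ℚ⟦X⟧) ^ 21 ∣ (1 - (X : ℚ⟦X⟧) ^ 6)⁻¹ - (1 + X ^ 6 + X ^ 12 + X ^ 18) := by
  refine dvd_trans (pow_dvd_pow X (by norm_num : 21 ≤ 24)) (inv_approx (by norm_num) ?_)
  ring

private lemma inv8 : (X : ℚ⟦X⟧) ^ 21 ∣ (1 - (X : ℚ⟦X⟧) ^ 8)⁻¹ - (1 + X ^ 8 + X ^ 16) := by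
  refine dvd_trans (pow_dvd_pow X (by norm_num : 21 ≤ 24)) (inv_approx (by norm_num) ?_)
  ring

private lemma inv10 : (X : ℚ⟦X⟧) ^ 21 ∣ (1 - (X : ℚ⟦X⟧) ^ 10)⁻¹ - (1 + X ^ 10 + X ^ 20) := by
  refine dvd_trans (pow_dvd_pow X (by norm_num : 21 ≤ 30)) (inv_approx (by norm_num) ?_)
  ring

private lemma inv12 : (X : ℚ⟦X⟧) ^ 21 ∣ (1 - (X : ℚ⟦X⟧) ^ 12)⁻¹ - (1 + X ^ 12) := by
  refine dvd_trans (pow_dvd_pow X (by norm_num : 21 ≤ 24)) (inv_approx (by norm_num) ?_)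
  ring

private lemma inv14 : (X : ℚ⟦X⟧) ^ 21 ∣ (1 - (X : ℚ⟦X⟧) ^ 14)⁻¹ - (1 + X ^ 14) := by
  refine dvd_trans (pow_dvd_pow X (by norm_num : 21 ≤ 28)) (inv_approx (by norm_num) ?_)
  ring

set_option maxHeartbeats 4000000 in
private lemma key : (X : ℚ⟦X⟧) ^ 21 ∣ hBar -
    (1 + X ^ 2 + C (R := ℚ) 2 * X ^ 4 + C (R := ℚ) 4 * X ^ 6 + C (R := ℚ) 6 * X ^ 8 + C (R := ℚ) 10 * X ^ 10 + C (R := ℚ) 16 * X ^ 12 + C (R := ℚ) 23 * X ^ 14 + C (R := ℚ) 13 * X ^ 16 - C (R := ℚ) 96 * X ^ 18 - C (R := ℚ) 1299 * X ^ 20) := by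
  have h1 : (X : ℚ⟦X⟧) ^ 21 ∣ (1 - (X : ℚ⟦X⟧) ^ 2)⁻¹ - (1 + X ^ 2 + X ^ 4 + X ^ 6 + X ^ 8 + X ^ 10 + X ^ 12 + X ^ 14 + X ^ 16 + X ^ 18 + X ^ 20) := inv2
  have h2 : (X : ℚ⟦X⟧) ^ 21 ∣ (1 - (X : ℚ⟦X⟧) ^ 2)⁻¹ *
      (1 - (X : ℚ⟦X⟧) ^ 4)⁻¹ -
      (1 + X ^ 2 + C (R := ℚ) 2 * X ^ 4 + C (R := ℚ) 2 * X ^ 6 + C (R := ℚ) 3 * X ^ 8 + C (R := ℚ) 3 * X ^ 10 + C (R := ℚ) 4 * X ^ 12 + C (R := ℚ) 4 * X ^ 14 + C (R := ℚ) 5 * X ^ 16 + C (R := ℚ) 5 * X ^ 18 + C (R := ℚ) 6 * X ^ 20) := by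
    refine step_s6 h1 (inv4) (q := C (R := ℚ) 5 * X + C (R := ℚ) 5 * X ^ 3 + C (R := ℚ) 4 * X ^ 5 + C (R := ℚ) 4 * X ^ 7 + C (R := ℚ) 3 * X ^ 9 + C (R := ℚ) 3 * X ^ 11 + C (R := ℚ) 2 * X ^ 13 + C (R := ℚ) 2 * X ^ 15 + X ^ 17 + X ^ 19) ?_
    simp only [map_ofNat, map_one]
    ring
  have h3 : (X : ℚ⟦X⟧) ^ 21 ∣ (1 - (X : ℚ⟦X⟧) ^ 2)⁻¹ *
      (1 - (X : ℚ⟦X⟧) ^ 4)⁻¹ *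
      ((1 - (X : ℚ⟦X⟧) ^ 6)⁻¹) ^ 2 -
      (1 + X ^ 2 + C (R := ℚ) 2 * X ^ 4 + C (R := ℚ) 4 * X ^ 6 + C (R := ℚ) 5 * X ^ 8 + C (R := ℚ) 7 * X ^ 10 + C (R := ℚ) 11 * X ^ 12 + C (R := ℚ) 13 * X ^ 14 + C (R := ℚ) 17 * X ^ 16 + C (R := ℚ) 23 * X ^ 18 + C (R := ℚ) 27 * X ^ 20) := by
    refine step_s6 h2 (sq_approx inv6) (q := C (R := ℚ) 27 * X + C (R := ℚ) 33 * X ^ 3 + C (R := ℚ) 39 * X ^ 5 + C (R := ℚ) 33 * X ^ 7 + C (R := ℚ) 39 * X ^ 9 + C (R := ℚ) 45 * X ^ 11 + C (R := ℚ) 33 * X ^ 13 + C (R := ℚ) 37 * X ^ 15 + C (R := ℚ) 43 * X ^ 17 + C (R := ℚ) 23 * X ^ 19 + C (R := ℚ) 25 * X ^ 21 + C (R := ℚ) 29 * X ^ 23 + C (R := ℚ) 13 * X ^ 25 + C (R := ℚ) 14 * X ^ 27 + C (R := ℚ) 16 * X ^ 29 + C (R := ℚ) 5 * X ^ 31 +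 C (R := ℚ) 5 * X ^ 33 + C (R := ℚ) 6 * X ^ 35) ?_
    simp only [map_ofNat, map_one]
    ring
  have h4 : (X : ℚ⟦X⟧) ^ 21 ∣ (1 - (X : ℚ⟦X⟧) ^ 2)⁻¹ *
      (1 - (X : ℚ⟦X⟧) ^ 4)⁻¹ *
      ((1 - (X : ℚ⟦X⟧) ^ 6)⁻¹) ^ 2 *
      (1 - (X : ℚ⟦X⟧) ^ 8)⁻¹ -
      (1 + X ^ 2 + C (R := ℚ) 2 * X ^ 4 + C (R := ℚ) 4 * X ^ 6 + C (R := ℚ) 6 * X ^ 8 + C (R := ℚ) 8 * X ^ 10 + C (R := ℚ) 13 * X ^ 12 + C (R := ℚ) 17 * X ^ 14 + C (R := ℚ) 23 * X ^ 16 + C (R := ℚ) 31 * X ^ 18 + C (R := ℚ) 40 * X ^ 20) := by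
    refine step_s6 h3 (inv8) (q := C (R := ℚ) 17 * X + C (R := ℚ) 22 * X ^ 3 + C (R := ℚ) 30 * X ^ 5 + C (R := ℚ) 38 * X ^ 7 + C (R := ℚ) 13 * X ^ 9 + C (R := ℚ) 17 * X ^ 11 + C (R := ℚ) 23 * X ^ 13 + C (R := ℚ) 27 * X ^ 15) ?_
    simp only [map_ofNat, map_one]
    ring
  have h5 : (X : ℚ⟦X⟧) ^ 21 ∣ (1 - (X : ℚ⟦X⟧) ^ 2)⁻¹ *
      (1 - (X : ℚ⟦X⟧) ^ 4)⁻¹ *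
      ((1 - (X : ℚ⟦X⟧) ^ 6)⁻¹) ^ 2 *
      (1 - (X : ℚ⟦X⟧) ^ 8)⁻¹ *
      ((1 - (X : ℚ⟦X⟧) ^ 10)⁻¹) ^ 2 -
      (1 + X ^ 2 + C (R := ℚ) 2 * X ^ 4 + C (R := ℚ) 4 * X ^ 6 + C (R := ℚ) 6 * X ^ 8 + C (R := ℚ) 10 * X ^ 10 + C (R := ℚ) 15 * X ^ 12 + C (R := ℚ) 21 * X ^ 14 + C (R := ℚ) 31 * X ^ 16 + C (R := ℚ) 43 * X ^ 18 + C (R := ℚ) 59 * X ^ 20) := by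
    refine step_s6 h4 (sq_approx inv10) (q := C (R := ℚ) 29 * X + C (R := ℚ) 40 * X ^ 3 + C (R := ℚ) 58 * X ^ 5 + C (R := ℚ) 80 * X ^ 7 + C (R := ℚ) 106 * X ^ 9 + C (R := ℚ) 41 * X ^ 11 + C (R := ℚ) 55 * X ^ 13 + C (R := ℚ) 77 * X ^ 15 + C (R := ℚ) 105 * X ^ 17 + C (R := ℚ) 137 * X ^ 19 + C (R := ℚ) 27 * X ^ 21 + C (R := ℚ) 36 * X ^ 23 + C (R := ℚ) 50 * X ^ 25 + C (R := ℚ) 68 * X ^ 27 + C (R := ℚ) 88 * X ^ 29 + C (R := ℚ) 13 * X ^ 31 + C (R := ℚ) 17 * X ^ 33 + C (R := ℚ) 23 * X ^ 35 + C (R := ℚ) 31 * X ^ 37 + C (R := ℚ) 40 * X ^ 39) ?_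
    simp only [map_ofNat, map_one]
    ring
  have h6 : (X : ℚ⟦X⟧) ^ 21 ∣ (1 - (X : ℚ⟦X⟧) ^ 2)⁻¹ *
      (1 - (X : ℚ⟦X⟧) ^ 4)⁻¹ *
      ((1 - (X : ℚ⟦X⟧) ^ 6)⁻¹) ^ 2 *
      (1 - (X : ℚ⟦X⟧) ^ 8)⁻¹ *
      ((1 - (X : ℚ⟦X⟧) ^ 10)⁻¹) ^ 2 *
      (1 - (X : ℚ⟦X⟧) ^ 12)⁻¹ -
      (1 + X ^ 2 + C (R := ℚ) 2 * X ^ 4 + C (R := ℚ) 4 * X ^ 6 + C (R := ℚ) 6 * X ^ 8 + C (R := ℚ) 10 * X ^ 10 + C (R := ℚ) 16 * X ^ 12 + C (R := ℚ) 22 * X ^ 14 + C (R := ℚ) 33 * X ^ 16 + C (R := ℚ) 47 * X ^ 18 + C (R := ℚ) 65 * X ^ 20) := by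
    refine step_s6 h5 (inv12) (q := C (R := ℚ) 10 * X + C (R := ℚ) 15 * X ^ 3 + C (R := ℚ) 21 * X ^ 5 + C (R := ℚ) 31 * X ^ 7 + C (R := ℚ) 43 * X ^ 9 + C (R := ℚ) 59 * X ^ 11) ?_
    simp only [map_ofNat, map_one]
    ring
  have h7 : (X : ℚ⟦X⟧) ^ 21 ∣ (1 - (X : ℚ⟦X⟧) ^ 2)⁻¹ *
      (1 - (X : ℚ⟦X⟧) ^ 4)⁻¹ *
      ((1 - (X : ℚ⟦X⟧) ^ 6)⁻¹) ^ 2 *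
      (1 - (X : ℚ⟦X⟧) ^ 8)⁻¹ *
      ((1 - (X : ℚ⟦X⟧) ^ 10)⁻¹) ^ 2 *
      (1 - (X : ℚ⟦X⟧) ^ 12)⁻¹ *
      (1 - (X : ℚ⟦X⟧) ^ 14)⁻¹ -
      (1 + X ^ 2 + C (R := ℚ) 2 * X ^ 4 + C (R := ℚ) 4 * X ^ 6 + C (R := ℚ) 6 * X ^ 8 + C (R := ℚ) 10 * X ^ 10 + C (R := ℚ) 16 * X ^ 12 + C (R := ℚ) 23 * X ^ 14 + C (R := ℚ) 34 * X ^ 16 + C (R := ℚ) 49 * X ^ 18 + C (R := ℚ) 69 * X ^ 20) := by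
    refine step_s6 h6 (inv14) (q := C (R := ℚ) 6 * X + C (R := ℚ) 10 * X ^ 3 + C (R := ℚ) 16 * X ^ 5 + C (R := ℚ) 22 * X ^ 7 + C (R := ℚ) 33 * X ^ 9 + C (R := ℚ) 47 * X ^ 11 + C (R := ℚ) 65 * X ^ 13) ?_
    simp only [map_ofNat, map_one]
    ring
  have h8 : (X : ℚ⟦X⟧) ^ 21 ∣ (1 - (X : ℚ⟦X⟧) ^ 2)⁻¹ *
      (1 - (X : ℚ⟦X⟧) ^ 4)⁻¹ *
      ((1 - (X : ℚ⟦X⟧) ^ 6)⁻¹) ^ 2 *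
      (1 - (X : ℚ⟦X⟧) ^ 8)⁻¹ *
      ((1 - (X : ℚ⟦X⟧) ^ 10)⁻¹) ^ 2 *
      (1 - (X : ℚ⟦X⟧) ^ 12)⁻¹ *
      (1 - (X : ℚ⟦X⟧) ^ 14)⁻¹ *
      (1 - (X : ℚ⟦X⟧) ^ 16) ^ 21 -
      (1 + X ^ 2 + C (R := ℚ) 2 * X ^ 4 + C (R := ℚ) 4 * X ^ 6 + C (R := ℚ) 6 * X ^ 8 + C (R := ℚ) 10 * X ^ 10 + C (R := ℚ) 16 * X ^ 12 + C (R := ℚ) 23 * X ^ 14 + C (R := ℚ) 13 * X ^ 16 + C (R := ℚ) 28 * X ^ 18 + C (R := ℚ) 27 * X ^ 20) := by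
    refine step_s6 h7 (by simpa using pow_big 21 16 (by norm_num)) (q := -(C (R := ℚ) 84 * X) - C (R := ℚ) 126 * X ^ 3 - C (R := ℚ) 210 * X ^ 5 - C (R := ℚ) 336 * X ^ 7 - C (R := ℚ) 483 * X ^ 9 - C (R := ℚ) 714 * X ^ 11 - C (R := ℚ) 1029 * X ^ 13 - C (R := ℚ) 1449 * X ^ 15) ?_
    simp only [map_ofNat, map_one]
    ring
  have h9 : (X : ℚ⟦X⟧) ^ 21 ∣ (1 - (X : ℚ⟦X⟧) ^ 2)⁻¹ *
      (1 - (X : ℚ⟦X⟧) ^ 4)⁻¹ *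
      ((1 - (X : ℚ⟦X⟧) ^ 6)⁻¹) ^ 2 *
      (1 - (X : ℚ⟦X⟧) ^ 8)⁻¹ *
      ((1 - (X : ℚ⟦X⟧) ^ 10)⁻¹) ^ 2 *
      (1 - (X : ℚ⟦X⟧) ^ 12)⁻¹ *
      (1 - (X : ℚ⟦X⟧) ^ 14)⁻¹ *
      (1 - (X : ℚ⟦X⟧) ^ 16) ^ 21 *
      (1 - (X : ℚ⟦X⟧) ^ 18) ^ 124 -
      (1 + X ^ 2 + C (R := ℚ) 2 * X ^ 4 + C (R := ℚ) 4 * X ^ 6 + C (R := ℚ) 6 * X ^ 8 + C (R := ℚ) 10 * X ^ 10 + C (R := ℚ) 16 * X ^ 12 + C (R := ℚ) 23 * X ^ 14 + C (R := ℚ) 13 * X ^ 16 - C (R := ℚ) 96 * X ^ 18 - C (R := ℚ) 97 * X ^ 20) := by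
    refine step_s6 h8 (by simpa using pow_big 124 18 (by norm_num)) (q := -(C (R := ℚ) 248 * X) - C (R := ℚ) 496 * X ^ 3 - C (R := ℚ) 744 * X ^ 5 - C (R := ℚ) 1240 * X ^ 7 - C (R := ℚ) 1984 * X ^ 9 - C (R := ℚ) 2852 * X ^ 11 - C (R := ℚ) 1612 * X ^ 13 - C (R := ℚ) 3472 * X ^ 15 - C (R := ℚ) 3348 * X ^ 17) ?_
    simp only [map_ofNat, map_one]
    ring
  have h10 : (X : ℚ⟦X⟧) ^ 21 ∣ (1 - (X : ℚ⟦X⟧) ^ 2)⁻¹ *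
      (1 - (X : ℚ⟦X⟧) ^ 4)⁻¹ *
      ((1 - (X : ℚ⟦X⟧) ^ 6)⁻¹) ^ 2 *
      (1 - (X : ℚ⟦X⟧) ^ 8)⁻¹ *
      ((1 - (X : ℚ⟦X⟧) ^ 10)⁻¹) ^ 2 *
      (1 - (X : ℚ⟦X⟧) ^ 12)⁻¹ *
      (1 - (X : ℚ⟦X⟧) ^ 14)⁻¹ *
      (1 - (X : ℚ⟦X⟧) ^ 16) ^ 21 *
      (1 - (X : ℚ⟦X⟧) ^ 18) ^ 124 *
      (1 - (X : ℚ⟦X⟧) ^ 20) ^ 1202 -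
      (1 + X ^ 2 + C (R := ℚ) 2 * X ^ 4 + C (R := ℚ) 4 * X ^ 6 + C (R := ℚ) 6 * X ^ 8 + C (R := ℚ) 10 * X ^ 10 + C (R := ℚ) 16 * X ^ 12 + C (R := ℚ) 23 * X ^ 14 + C (R := ℚ) 13 * X ^ 16 - C (R := ℚ) 96 * X ^ 18 - C (R := ℚ) 1299 * X ^ 20) := by
    refine step_s6 h9 (by simpa using pow_big 1202 20 (by norm_num)) (q := -(C (R := ℚ) 1202 * X) - C (R := ℚ) 2404 * X ^ 3 - C (R := ℚ) 4808 * X ^ 5 - C (R := ℚ) 7212 * X ^ 7 - C (R := ℚ) 12020 * X ^ 9 - C (R := ℚ) 19232 * X ^ 11 - C (R := ℚ) 27646 * X ^ 13 - C (R := ℚ) 15626 * X ^ 15 + C (R := ℚ) 115392 * X ^ 17 + C (R := ℚ) 116594 * X ^ 19) ?_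
    simp only [map_ofNat, map_one]
    ring
  exact h10

/-- The coefficients of `h̄(X)` in degrees `0` through `20`: `1` in degree `0`;
`1, 2, 4, 6, 10, 16, 23, 13, -96, -1299` in degrees `2, 4, …, 20`; and `0` in
all odd degrees up to `19`. -/
theorem coeffs_hBar :
    PowerSeries.coeff (R := ℚ) 0 hBar = 1 ∧
    PowerSeries.coeff (R := ℚ) 2 hBar = 1 ∧
    PowerSeries.coeff (R := ℚ) 4 hBar = 2 ∧
    PowerSeries.coeff (R := ℚ) 6 hBar = 4 ∧
    PowerSeries.coeff (R := ℚ) 8 hBar = 6 ∧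
    PowerSeries.coeff (R := ℚ) 10 hBar = 10 ∧
    PowerSeries.coeff (R := ℚ) 12 hBar = 16 ∧
    PowerSeries.coeff (R := ℚ) 14 hBar = 23 ∧
    PowerSeries.coeff (R := ℚ) 16 hBar = 13 ∧
    PowerSeries.coeff (R := ℚ) 18 hBar = -96 ∧
    PowerSeries.coeff (R := ℚ) 20 hBar = -1299 ∧
    ∀ i, Odd i → i ≤ 19 → PowerSeries.coeff (R := ℚ) i hBar = 0 := by
  have key := PowerSeries.X_pow_dvd_iff.mp key
  have hc : ∀ i, i < 21 → PowerSeries.coeff (R := ℚ) i hBar =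
      PowerSeries.coeff (R := ℚ) i (1 + X ^ 2 + C (R := ℚ) 2 * X ^ 4 + C (R := ℚ) 4 * X ^ 6 + C (R := ℚ) 6 * X ^ 8 + C (R := ℚ) 10 * X ^ 10 + C (R := ℚ) 16 * X ^ 12 + C (R := ℚ) 23 * X ^ 14 + C (R := ℚ) 13 * X ^ 16 - C (R := ℚ) 96 * X ^ 18 - C (R := ℚ) 1299 * X ^ 20) := by
    intro i hi
    have h := key i hi
    rw [map_sub, sub_eq_zero] at h
    exact h
  refine ⟨?_, ?_, ?_, ?_, ?_, ?_, ?_, ?_, ?_, ?_, ?_, ?_⟩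
  · rw [hc 0 (by norm_num)]; simp [coeff_X_pow]
  · rw [hc 2 (by norm_num)]; simp [coeff_X_pow]
  · rw [hc 4 (by norm_num)]; simp [coeff_X_pow]
  · rw [hc 6 (by norm_num)]; simp [coeff_X_pow]
  · rw [hc 8 (by norm_num)]; simp [coeff_X_pow]
  · rw [hc 10 (by norm_num)]; simp [coeff_X_pow]
  · rw [hc 12 (by norm_num)]; simp [coeff_X_pow]
  · rw [hc 14 (by norm_num)]; simp [coeff_X_pow]
  · rw [hc 16 (by norm_num)]; simp [coeff_X_pow]
  · rw [hc 18 (by norm_num)]; simp [coeff_X_pow]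
  · rw [hc 20 (by norm_num)]; simp [coeff_X_pow]
  · intro i hodd hle
    rw [hc i (by omega)]
    interval_cases i <;> first
      | (exfalso; revert hodd; decide)
      | simp [coeff_X_pow]
end
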